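/- Let σ_m(n) ∈ (0,1) denote the unique root in (0,1) of the equation z = α_n(mμ_n − mμ_n z), and assume additionally that n ε_n → C ≥ 0. Then σ_m(n)^n → e^{−2C/ρ̃_2} as n → ∞. -/

import Mathlib

open MeasureTheory Filter Topology

private lemma exp_quad_lb (u : ℝ) (hu : 0 ≤ u) : 1 + u + u^2/2 ≤ Real.exp u := by
  have := Real.sum_le_exp_of_nonneg hu 3
  simp [Finset.sum_range_succ] at this
  nlinarith [this]

private lemma exp_neg_le (u : ℝ) (hu : 0 ≤ u) : Real.exp (-u) ≤ 1 - u + u^2/2 := by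
  have h := exp_quad_lb u hu
  have hm : Real.exp (-u) * Real.exp u = 1 := by rw [← Real.exp_add]; simp
  have hint := mul_le_mul_of_nonneg_left h (le_of_lt (Real.exp_pos (-u)))
  nlinarith [hint, hm, sq_nonneg (u^2), sq_nonneg u, Real.exp_pos (-u), hu]

private lemma phi_mono : Monotone (fun u : ℝ => 1 - u^2/2 - (1-u)*Real.exp u) := by
  have hd : ∀ x : ℝ, HasDerivAt (fun u : ℝ => 1 - u^2/2 - (1-u)*Real.exp u) (x*Real.exp x - x) x := by
    intro x
    have h1 : HasDerivAt (fun u : ℝ => (1-u)*Real.exp u) ((-1)*Real.exp x + (1-x)*Real.exp x) x :=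
      (((hasDerivAt_id x).const_sub 1)).mul (Real.hasDerivAt_exp x)
    have h2 : HasDerivAt (fun u : ℝ => 1 - u^2/2) (-(2*x^1/2)) x := by
      simpa using (((hasDerivAt_pow 2 x).div_const 2).const_sub 1)
    have := h2.sub h1
    exact this.congr_deriv (by ring)
  apply monotone_of_deriv_nonneg
  · intro x; exact (hd x).differentiableAt
  · intro x
    rw [(hd x).deriv]
    rcases le_or_gt 0 x with hx | hx
    · nlinarith [Real.add_one_le_exp x]
    · nlinarith [Real.exp_le_one_iff.mpr hx.le]

private lemma exp_neg_ge (u : ℝ) (hu : 0 ≤ u) :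
    1 - u + u^2/2 * Real.exp (-u) ≤ Real.exp (-u) := by
  have h0 := phi_mono hu
  simp only [Real.exp_zero] at h0
  have hφ : (1-u)*Real.exp u + u^2/2 ≤ 1 := by nlinarith [h0]
  have hm : Real.exp (-u) * Real.exp u = 1 := by rw [← Real.exp_add]; simp
  have hint := mul_le_mul_of_nonneg_right hφ (le_of_lt (Real.exp_pos (-u)))
  nlinarith [hint, hm, Real.exp_pos (-u)]

set_option maxHeartbeats 1000000 in
private lemma key_ineq (ν : Measure ℝ) [IsProbabilityMeasure ν] (c : ℝ) (hc : 0 < c)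
    (hsupp : ν {x | x < 0} = 0)
    (h1 : Integrable (fun x => x) ν) (h2 : Integrable (fun x => x ^ 2) ν)
    (h3 : Integrable (fun x => x ^ 3) ν)
    (e : ℝ) (he : 0 < e) (he2 : e < 1/2)
    (hI : (∫ x, x ∂ν)⁻¹ / c = 1 - e)
    (σ : ℝ) (hσ0 : 0 < σ) (hσ1 : σ < 1)
    (hroot : ∫ x, Real.exp (-((c - c * σ) * x)) ∂ν = σ)
    (B : ℝ) (hB : ∫ x, (c * x) ^ 3 ∂ν ≤ B) :
    2 * e ≤ (1 - e) * ((1 - σ) * (∫ x, (c * x) ^ 2 ∂ν)) ∧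
    (1 - e) * ((1 - σ) * ((∫ x, (c * x) ^ 2 ∂ν) - (1 - σ) * (∫ x, (c * x) ^ 3 ∂ν))) ≤ 2 * e ∧
    (1 - e) * ((1 - σ) * (Real.exp (-(2 * Real.sqrt (max B 1))) / 8)) ≤ 2 * e ∧
    0 ≤ ∫ x, (c * x) ^ 3 ∂ν := by
  have hx0 : ∀ᵐ x ∂ν, 0 ≤ x := by
    rw [ae_iff]
    convert hsupp using 2
    simp [not_le]
  set δ : ℝ := 1 - σ with hδ_def
  have hδ : 0 < δ := by rw [hδ_def]; linarith only [hσ1]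
  have hδ1 : δ < 1 := by rw [hδ_def]; linarith only [hσ0]
  set s : ℝ := c * δ with hs_def
  have hs : 0 < s := mul_pos hc hδ
  have he1 : (0:ℝ) < 1 - e := by linarith only [he2]
  set I1 : ℝ := ∫ x, x ∂ν with hI1_def
  have hI1 : I1⁻¹ = (1-e)*c := (div_eq_iff hc.ne').mp hI
  have hI1p : 0 < I1 := by
    rw [inv_eq_iff_eq_inv] at hI1
    rw [hI1]; positivity
  set J : ℝ := c * I1 with hJ_def
  have hcI : (1-e) * J = 1 := by
    have h := inv_mul_cancel₀ hI1p.ne'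
    rw [hI1] at h
    rw [hJ_def]; linarith only [h]
  have hJpos : 0 < J := by rw [hJ_def]; positivity
  -- integrability
  have meas_exp : AEStronglyMeasurable (fun x => Real.exp (-(s*x))) ν :=
    (Real.continuous_exp.comp (continuous_const.mul continuous_id).neg).aestronglyMeasurable
  have ie : Integrable (fun x => Real.exp (-(s*x))) ν := by
    refine Integrable.mono' (integrable_const 1) meas_exp ?_
    filter_upwards [hx0] with x hx
    rw [Real.norm_eq_abs, abs_of_pos (Real.exp_pos _)]
    exact Real.exp_le_one_iff.mpr (neg_nonpos.mpr (mul_nonneg hs.le hx))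
  have i2 : Integrable (fun x => (c*x)^2) ν := by
    simpa [mul_pow] using h2.const_mul (c^2)
  have i3 : Integrable (fun x => (c*x)^3) ν := by
    simpa [mul_pow] using h3.const_mul (c^3)
  have iG : Integrable (fun x => (c*x)^2 * Real.exp (-(s*x))) ν := by
    refine Integrable.mono' i2 (((continuous_const.mul continuous_id).pow 2).mul
      (Real.continuous_exp.comp (continuous_const.mul continuous_id).neg)).aestronglyMeasurable ?_
    filter_upwards [hx0] with x hx
    rw [Real.norm_eq_abs, abs_of_nonneg (by positivity)]
    exact mul_le_of_le_one_right (sq_nonneg _)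
      (Real.exp_le_one_iff.mpr (neg_nonpos.mpr (mul_nonneg hs.le hx)))
  have hroot' : ∫ x, Real.exp (-(s*x)) ∂ν = σ := by
    rw [← hroot]
    congr 1; funext x; congr 2; rw [hs_def, hδ_def]; ring
  -- quantities
  set M2 : ℝ := ∫ x, x^2 ∂ν with hM2_def
  set P2 : ℝ := ∫ x, (c*x)^2 ∂ν with hP2_def
  set P3 : ℝ := ∫ x, (c*x)^3 ∂ν with hP3_def
  set G : ℝ := ∫ x, (c*x)^2 * Real.exp (-(s*x)) ∂ν with hG_def
  have hP2c : P2 = c^2 * M2 := by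
    rw [hP2_def, hM2_def]; simp only [mul_pow]; exact integral_const_mul _ _
  have hK4 : 0 ≤ P3 := by
    rw [hP3_def]
    refine integral_nonneg_of_ae ?_
    filter_upwards [hx0] with x hx; positivity
  -- inequality (1): σ ≤ 1 - s*I1 + s^2/2*M2
  have ia1 : Integrable (fun x => 1 - s*x) ν := (integrable_const 1).sub (h1.const_mul s)
  have A1 : σ ≤ 1 - s*I1 + s^2/2 * M2 := by
    rw [← hroot']
    have hmono : ∫ x, Real.exp (-(s*x)) ∂ν ≤ ∫ x, (1 - s*x + s^2/2 * x^2) ∂ν := by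
      refine integral_mono_ae ie (ia1.add (h2.const_mul (s^2/2))) ?_
      filter_upwards [hx0] with x hx
      have := exp_neg_le (s*x) (by positivity)
      linarith only [this]
    calc ∫ x, Real.exp (-(s*x)) ∂ν ≤ ∫ x, (1 - s*x + s^2/2 * x^2) ∂ν := hmono
      _ = 1 - s*I1 + s^2/2 * M2 := by
        rw [integral_add ia1 (h2.const_mul (s^2/2)),
          integral_sub (integrable_const 1) (h1.const_mul s),
          integral_const_mul, integral_const_mul, integral_const]
        simp
        rfl
  -- inequality (3): 1 - s*I1 + δ^2/2 * G ≤ σ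
  have A3 : 1 - s*I1 + δ^2/2 * G ≤ σ := by
    rw [← hroot']
    have hmono : ∫ x, (1 - s*x + δ^2/2 * ((c*x)^2 * Real.exp (-(s*x)))) ∂ν
        ≤ ∫ x, Real.exp (-(s*x)) ∂ν := by
      refine integral_mono_ae (ia1.add (iG.const_mul (δ^2/2))) ie ?_
      filter_upwards [hx0] with x hx
      have h := exp_neg_ge (s*x) (by positivity)
      have hq : (s*x)^2/2 * Real.exp (-(s*x)) = δ^2/2 * ((c*x)^2 * Real.exp (-(s*x))) := by
        rw [hs_def]; ring
      linarith only [h, hq]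
    calc (1:ℝ) - s*I1 + δ^2/2 * G
        = ∫ x, (1 - s*x + δ^2/2 * ((c*x)^2 * Real.exp (-(s*x)))) ∂ν := by
          rw [integral_add ia1 (iG.const_mul (δ^2/2)),
            integral_sub (integrable_const 1) (h1.const_mul s),
            integral_const_mul, integral_const_mul, integral_const]
          simp
          rfl
      _ ≤ ∫ x, Real.exp (-(s*x)) ∂ν := hmono
  -- G lower bound 1: P2 - δ*P3 ≤ G
  have hG1 : P2 - δ*P3 ≤ G := by
    have hmono : ∫ x, ((c*x)^2 - δ*(c*x)^3) ∂ν ≤ ∫ x, (c*x)^2 * Real.exp (-(s*x)) ∂ν := by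
      refine integral_mono_ae (i2.sub (i3.const_mul δ)) iG ?_
      filter_upwards [hx0] with x hx
      have h := Real.add_one_le_exp (-(s*x))
      have h2' := mul_le_mul_of_nonneg_left h (sq_nonneg (c*x))
      have hq : (c*x)^2 * (-(s*x)+1) = (c*x)^2 - δ*(c*x)^3 := by rw [hs_def]; ring
      linarith only [h2', hq]
    calc P2 - δ*P3 = ∫ x, ((c*x)^2 - δ*(c*x)^3) ∂ν := by
          rw [integral_sub i2 (i3.const_mul δ), integral_const_mul]
      _ ≤ G := hmono
  -- truncation lower bound for G
  set Mx : ℝ := max B 1 with hMx_def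
  have hMx1 : 1 ≤ Mx := le_max_right _ _
  have hMxB : B ≤ Mx := le_max_left _ _
  set T : ℝ := 2 * Real.sqrt Mx with hT_def
  have hT2 : T^2 = 4 * Mx := by
    rw [hT_def, mul_pow, Real.sq_sqrt (by linarith only [hMx1])]; ring
  have hTge : 2 ≤ T := by
    rw [hT_def]
    linarith only [Real.one_le_sqrt.mpr hMx1]
  have hTpos : (0:ℝ) < T^2 := pow_pos (by linarith only [hTge]) 2
  set h : ℝ → ℝ := fun x => if c*x ∈ Set.Icc (4⁻¹:ℝ) T then c*x else 0 with hh_def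
  have hmeas : Measurable h := by
    refine Measurable.ite ?_ (measurable_id.const_mul c) measurable_const
    exact (measurable_id.const_mul c) measurableSet_Icc
  have ih : Integrable h ν := by
    refine Integrable.mono' (integrable_const T) hmeas.aestronglyMeasurable ?_
    filter_upwards with x
    rw [hh_def]
    by_cases hmem : c*x ∈ Set.Icc (4⁻¹:ℝ) T
    · simp only [hmem, if_pos]
      rw [Real.norm_eq_abs, abs_of_nonneg (by linarith only [hmem.1])]
      exact hmem.2
    · simp only [hmem, if_neg, not_false_iff, norm_zero]; linarith only [hTge]
  have hG2 : Real.exp (-T)/8 ≤ G := by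
    have step1 : Real.exp (-T)/4 * (∫ x, h x ∂ν) ≤ G := by
      rw [← integral_const_mul]
      refine integral_mono_ae (ih.const_mul _) iG ?_
      filter_upwards [hx0] with x hx
      simp only [hh_def]
      by_cases hmem : c*x ∈ Set.Icc (4⁻¹:ℝ) T
      · simp only [hmem, if_pos]
        have hsx : -T ≤ -(s*x) := by
          have hx1 : 0 ≤ c*x := mul_nonneg hc.le hx
          have hd1 : (0:ℝ) ≤ 1 - δ := by linarith only [hδ1]
          have : s*x ≤ c*x := by
            rw [hs_def]
            linarith only [mul_nonneg hx1 hd1]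
          linarith only [this, hmem.2]
        have hE := Real.exp_le_exp.mpr hsx
        have hp1 : 0 ≤ ((c*x) - 4⁻¹) * ((c*x) * Real.exp (-T)) :=
          mul_nonneg (by linarith only [hmem.1])
            (mul_nonneg (by linarith only [hmem.1]) (Real.exp_pos _).le)
        have hp2 : 0 ≤ (c*x)^2 * (Real.exp (-(s*x)) - Real.exp (-T)) :=
          mul_nonneg (sq_nonneg _) (by linarith only [hE])
        linarith only [hp1, hp2]
      · simp only [hmem, if_neg, not_false_iff, mul_zero]
        positivity
    have step2 : (1:ℝ)/2 ≤ ∫ x, h x ∂ν := by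
      have iad : Integrable (fun x => c*x - 4⁻¹) ν := (h1.const_mul c).sub (integrable_const _)
      have hmono : ∫ x, (c*x - 4⁻¹ - (c*x)^3/T^2) ∂ν ≤ ∫ x, h x ∂ν := by
        refine integral_mono_ae (iad.sub (i3.div_const _)) ih ?_
        filter_upwards [hx0] with x hx
        simp only [hh_def]
        by_cases hmem : c*x ∈ Set.Icc (4⁻¹:ℝ) T
        · simp only [hmem, if_pos]
          have hn : 0 ≤ (c*x)^3/T^2 := by positivity
          linarith only [hn]
        · simp only [hmem, if_neg, not_false_iff]
          rw [Set.mem_Icc, not_and_or, not_le, not_le] at hmem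
          rcases hmem with hlt | hgt
          · have hn : 0 ≤ (c*x)^3/T^2 := by positivity
            linarith only [hn, hlt]
          · have hkey : c*x ≤ (c*x)^3/T^2 := by
              rw [le_div_iff₀ hTpos]
              have h1' : (0:ℝ) < c*x := by linarith only [hTge, hgt]
              linarith only [mul_pos (mul_pos h1'
                (by linarith only [hgt] : (0:ℝ) < c*x - T))
                (by linarith only [h1', hgt, hTge] : (0:ℝ) < c*x + T)]
            linarith only [hkey]
      have hval : ∫ x, (c*x - 4⁻¹ - (c*x)^3/T^2) ∂ν = c*I1 - 4⁻¹ - P3/T^2 := by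
        rw [integral_sub iad (i3.div_const _),
          integral_sub (h1.const_mul c) (integrable_const _),
          integral_const_mul, integral_div, integral_const]
        simp
        rfl
      have hcIge : 1 ≤ J := by nlinarith only [hcI, hJpos, he]
      have hcIge' : 1 ≤ c*I1 := hJ_def ▸ hcIge
      have hP3T : P3/T^2 ≤ 4⁻¹ := by
        rw [div_le_iff₀ hTpos, hT2]
        linarith only [hB, hMxB]
      rw [hval] at hmono
      linarith only [hmono, hcIge', hP3T]
    calc Real.exp (-T)/8 = Real.exp (-T)/4 * (1/2) := by ring
      _ ≤ Real.exp (-T)/4 * (∫ x, h x ∂ν) :=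
        mul_le_mul_of_nonneg_left step2 (by positivity)
      _ ≤ G := step1
  -- the linear-algebraic consequences
  have hexp : Real.exp (-(2 * Real.sqrt (max B 1)))/8 = Real.exp (-T)/8 := by
    rw [hT_def, hMx_def]
  have hσδ : σ = 1 - δ := by rw [hδ_def]; ring
  have hsI : s * I1 = δ * J := by rw [hs_def, hJ_def]; ring
  have hsP : s^2/2 * M2 = δ^2/2 * P2 := by rw [hs_def, hP2c]; ring
  clear_value T Mx G P3 P2 M2 J I1 s δ
  have KG : (1-e)*(δ*G) ≤ 2*e := by
    have e3 : δ^2/2 * G ≤ δ*J - δ := by linarith only [A3, hsI, hσδ]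
    have H := mul_le_mul_of_nonneg_left e3 he1.le
    have H2 : (1-e)*(δ*J - δ) = e*δ := by linear_combination δ * hcI
    have H' : (1-e)*(δ^2/2*G) ≤ e*δ := by linarith only [H, H2]
    have step : δ * ((1-e)*(δ*G)) ≤ δ * (2*e) := by linarith only [H']
    exact le_of_mul_le_mul_left step hδ
  refine ⟨?_, ?_, ?_, hK4⟩
  · have e1 : δ*J - δ ≤ δ^2/2 * P2 := by linarith only [A1, hsI, hsP, hσδ]
    have H := mul_le_mul_of_nonneg_left e1 he1.le
    have H2 : (1-e)*(δ*J - δ) = e*δ := by linear_combination δ * hcI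
    have H' : e*δ ≤ (1-e)*(δ^2/2*P2) := by linarith only [H, H2]
    have step : δ * (2*e) ≤ δ * ((1-e)*(δ*P2)) := by linarith only [H']
    exact le_of_mul_le_mul_left step hδ
  · have hp : 0 ≤ ((1-e)*δ) * (G - (P2 - δ*P3)) :=
      mul_nonneg (mul_nonneg he1.le hδ.le) (by linarith only [hG1])
    linarith only [KG, hp]
  · have hp : 0 ≤ ((1-e)*δ) * (G - Real.exp (-T)/8) :=
      mul_nonneg (mul_nonneg he1.le hδ.le) (by linarith only [hG2])
    linarith only [KG, hp]

/-- Relation (7.3): in the heavy-traffic regime with `n ε_n → C ≥ 0`, the root `σ_m(n)` of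
`z = α_n(mμ_n - mμ_n z)` satisfies `σ_m(n)^n → e^{-2C/ρ̃₂}`. -/
theorem root_power_limit
    (m : ℕ) (hm : 1 ≤ m)
    (A : ℕ → Measure ℝ) [∀ n, IsProbabilityMeasure (A n)]
    (μ : ℕ → ℝ) (hμ : ∀ n, 0 < μ n)
    (hsupp : ∀ n, A n {x | x < 0} = 0)
    (hint1 : ∀ n, Integrable (fun x => x) (A n))
    (hint2 : ∀ n, Integrable (fun x => x ^ 2) (A n))
    (hint3 : ∀ n, Integrable (fun x => x ^ 3) (A n))
    (ε : ℕ → ℝ) (hε : ∀ n, 0 < ε n) (hε0 : Tendsto ε atTop (𝓝 0))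
    (hϱ : ∀ n, (∫ x, x ∂(A n))⁻¹ / (m * μ n) = 1 - ε n)
    (hϱ3 : ∃ B : ℝ, ∀ n, ∫ x, (m * μ n * x) ^ 3 ∂(A n) ≤ B)
    (ρ2 : ℝ) (hϱ2 : Tendsto (fun n => ∫ x, (m * μ n * x) ^ 2 ∂(A n)) atTop (𝓝 ρ2))
    (σ : ℕ → ℝ) (hσ : ∀ n, σ n ∈ Set.Ioo (0 : ℝ) 1)
    (hroot : ∀ n, ∫ x, Real.exp (-((m * μ n - m * μ n * σ n) * x)) ∂(A n) = σ n)
    (C : ℝ) (hC : 0 ≤ C)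
    (hnε : Tendsto (fun n : ℕ => (n : ℝ) * ε n) atTop (𝓝 C)) :
    Tendsto (fun n => σ n ^ n) atTop (𝓝 (Real.exp (-(2 * C / ρ2)))) := by
  obtain ⟨B, hB⟩ := hϱ3
  have hcpos : ∀ n, 0 < (m : ℝ) * μ n := fun n =>
    mul_pos (lt_of_lt_of_le one_pos (Nat.one_le_cast.mpr hm)) (hμ n)
  set c₀ : ℝ := Real.exp (-(2 * Real.sqrt (max B 1))) / 8 with hc₀_def
  have hc₀ : 0 < c₀ := by rw [hc₀_def]; positivity
  set P2 : ℕ → ℝ := fun n => ∫ x, ((m : ℝ) * μ n * x) ^ 2 ∂(A n) with hP2_def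
  set P3 : ℕ → ℝ := fun n => ∫ x, ((m : ℝ) * μ n * x) ^ 3 ∂(A n) with hP3_def
  have hδpos : ∀ n, 0 < 1 - σ n := fun n => by linarith only [(hσ n).2]
  have hε2 : ∀ᶠ n in atTop, ε n < 1/2 := hε0.eventually (eventually_lt_nhds (by norm_num))
  have hkey : ∀ᶠ n in atTop,
      2 * ε n ≤ (1 - ε n) * ((1 - σ n) * P2 n) ∧
      (1 - ε n) * ((1 - σ n) * (P2 n - (1 - σ n) * P3 n)) ≤ 2 * ε n ∧
      (1 - ε n) * ((1 - σ n) * c₀) ≤ 2 * ε n ∧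
      0 ≤ P3 n := by
    filter_upwards [hε2] with n hn
    exact key_ineq (A n) ((m : ℝ) * μ n) (hcpos n) (hsupp n) (hint1 n) (hint2 n) (hint3 n)
      (ε n) (hε n) hn (hϱ n) (σ n) (hσ n).1 (hσ n).2 (hroot n) B (hB n)
  -- δ → 0
  have hδ0 : Tendsto (fun n => 1 - σ n) atTop (𝓝 0) := by
    refine squeeze_zero' (g := fun n : ℕ => 4/c₀ * ε n) (Eventually.of_forall fun n => (hδpos n).le) ?_ ?_
    · filter_upwards [hkey, hε2] with n hk hn
      obtain ⟨k1, k2, k3, k4⟩ := hk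
      rw [div_mul_eq_mul_div, le_div_iff₀ hc₀]
      have hp : 0 ≤ (1 - ε n - 1/2) * ((1 - σ n) * c₀) :=
        mul_nonneg (by linarith only [hn]) (mul_nonneg (hδpos n).le hc₀.le)
      linarith only [k3, hp]
    · have := hε0.const_mul (4/c₀)
      simpa using this
  have hσt : Tendsto σ atTop (𝓝 1) := by
    have := (tendsto_const_nhds (x := (1:ℝ)) (f := atTop (α := ℕ))).sub hδ0
    simpa using this
  -- c₀ ≤ P2 eventually, so ρ2 > 0
  have hP2lb : ∀ᶠ n in atTop, c₀ ≤ P2 n := by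
    filter_upwards [hkey, hε2] with n hk hn
    obtain ⟨k1, k2, k3, k4⟩ := hk
    have hpos : 0 < (1 - ε n) * (1 - σ n) := mul_pos (by linarith only [hn]) (hδpos n)
    have h' : ((1 - ε n) * (1 - σ n)) * c₀ ≤ ((1 - ε n) * (1 - σ n)) * P2 n := by
      linarith only [k1, k3]
    exact le_of_mul_le_mul_left h' hpos
  have hρ2pos : 0 < ρ2 := lt_of_lt_of_le hc₀ (ge_of_tendsto hϱ2 hP2lb)
  -- (1-σ)·P3 → 0
  have hδP3 : Tendsto (fun n => (1 - σ n) * P3 n) atTop (𝓝 0) := by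
    refine squeeze_zero' ?_ ?_ (by simpa using hδ0.mul_const B)
    · filter_upwards [hkey] with n hk
      exact mul_nonneg (hδpos n).le hk.2.2.2
    · filter_upwards with n
      exact mul_le_mul_of_nonneg_left (hB n) (hδpos n).le
  have hQ : Tendsto (fun n => P2 n - (1 - σ n) * P3 n) atTop (𝓝 ρ2) := by
    have := hϱ2.sub hδP3
    simpa using this
  have hQlb : ∀ᶠ n in atTop, ρ2/2 ≤ P2 n - (1 - σ n) * P3 n :=
    hQ.eventually (eventually_ge_nhds (by linarith only [hρ2pos]))
  -- n·δ → 2C/ρ2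
  have hnδ : Tendsto (fun n : ℕ => (n : ℝ) * (1 - σ n)) atTop (𝓝 (2*C/ρ2)) := by
    have hlo_t : Tendsto (fun n : ℕ => 2*((n:ℝ) * ε n) / ((1 - ε n) * P2 n)) atTop
        (𝓝 (2*C/ρ2)) := by
      have hd : Tendsto (fun n => (1 - ε n) * P2 n) atTop (𝓝 ((1-0) * ρ2)) :=
        (tendsto_const_nhds.sub hε0).mul hϱ2
      have := (hnε.const_mul 2).div hd (by simpa using hρ2pos.ne')
      simpa only [sub_zero, one_mul, Pi.div_def] using this
    have hhi_t : Tendsto (fun n : ℕ => 2*((n:ℝ) * ε n) / ((1 - ε n) * (P2 n - (1 - σ n) * P3 n)))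
        atTop (𝓝 (2*C/ρ2)) := by
      have hd : Tendsto (fun n => (1 - ε n) * (P2 n - (1 - σ n) * P3 n)) atTop
          (𝓝 ((1-0) * ρ2)) := (tendsto_const_nhds.sub hε0).mul hQ
      have := (hnε.const_mul 2).div hd (by simpa using hρ2pos.ne')
      simpa only [sub_zero, one_mul, Pi.div_def] using this
    refine tendsto_of_tendsto_of_tendsto_of_le_of_le' hlo_t hhi_t ?_ ?_
    · filter_upwards [hkey, hε2, hP2lb] with n hk hn hp2
      obtain ⟨k1, k2, k3, k4⟩ := hk
      have hpos : 0 < (1 - ε n) * P2 n :=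
        mul_pos (by linarith only [hn]) (lt_of_lt_of_le hc₀ hp2)
      rw [div_le_iff₀ hpos]
      have := mul_le_mul_of_nonneg_left k1 (Nat.cast_nonneg (α := ℝ) n)
      linarith only [this]
    · filter_upwards [hkey, hε2, hQlb] with n hk hn hq
      obtain ⟨k1, k2, k3, k4⟩ := hk
      have hpos : 0 < (1 - ε n) * (P2 n - (1 - σ n) * P3 n) :=
        mul_pos (by linarith only [hn]) (lt_of_lt_of_le (by linarith only [hρ2pos]) hq)
      rw [le_div_iff₀ hpos]
      have := mul_le_mul_of_nonneg_left k2 (Nat.cast_nonneg (α := ℝ) n)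
      linarith only [this]
  -- n·log σ → -(2C/ρ2)
  have hlog : Tendsto (fun n : ℕ => (n : ℝ) * Real.log (σ n)) atTop (𝓝 (-(2*C/ρ2))) := by
    have hlo_t : Tendsto (fun n : ℕ => -((n:ℝ) * (1 - σ n)) / σ n) atTop (𝓝 (-(2*C/ρ2))) := by
      have := (hnδ.neg).div hσt one_ne_zero
      simpa only [div_one, Pi.div_def] using this
    refine tendsto_of_tendsto_of_tendsto_of_le_of_le' hlo_t hnδ.neg ?_ ?_
    · filter_upwards with n
      have hσp := (hσ n).1
      have hinv := Real.log_le_sub_one_of_pos (inv_pos.mpr hσp)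
      rw [Real.log_inv] at hinv
      have h2 : 1 - (σ n)⁻¹ ≤ Real.log (σ n) := by linarith only [hinv]
      have h3 := mul_le_mul_of_nonneg_left h2 (Nat.cast_nonneg (α := ℝ) n)
      have h4 : -((n:ℝ) * (1 - σ n)) / σ n = (n:ℝ) * (1 - (σ n)⁻¹) := by
        field_simp
        ring
      rw [h4]
      exact h3
    · filter_upwards with n
      have h := Real.log_le_sub_one_of_pos (hσ n).1
      have h3 := mul_le_mul_of_nonneg_left h (Nat.cast_nonneg (α := ℝ) n)
      linarith only [h3]
  have hcong : ∀ n : ℕ, Real.exp ((n : ℝ) * Real.log (σ n)) = σ n ^ n := fun n => by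
    rw [Real.exp_nat_mul, Real.exp_log (hσ n).1]
  exact Tendsto.congr hcong ((Real.continuous_exp.tendsto _).comp hlog)
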